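/- Let N ≥ 1 and let p : Fin N → ℝ be nonnegative with total mass T = ∑_{j'} p_{j'} > 0. For every threshold t ∈ [0,1], the score-superlevel set S_t = {j : s(j) > t} captures at least a (1 − t) fraction of the total probability mass: ∑_{j ∈ S_t} p_j ≥ (1 − t)·T. (No distinctness assumption on the probabilities is needed.) -/

import Mathlib

open Finset

/-- For every threshold `t ∈ [0,1]`, the CRA score-superlevel set
`S_t = {j : s j > t}` captures at least a `(1 - t)` fraction of the total
probability mass.  No distinctness assumption on the probabilities is needed. -/
theorem cra_superlevel_coverage
    (N : ℕ) (hN : 1 ≤ N) (p : Fin N → ℝ)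
    (hp : ∀ j, 0 ≤ p j) (T : ℝ) (hTdef : T = ∑ j', p j') (hT : 0 < T)
    (s : Fin N → ℝ)
    (hs : s = fun j => (∑ j', if p j' ≤ p j then p j' else 0) / T)
    (t : ℝ) (ht0 : 0 ≤ t) (ht1 : t ≤ 1) :
    (1 - t) * T ≤ ∑ j ∈ Finset.univ.filter (fun j => t < s j), p j := by
  classical
  set S := Finset.univ.filter (fun j => t < s j) with hS
  set L := Finset.univ.filter (fun j => ¬ t < s j) with hL
  have hsplit : T = (∑ j ∈ S, p j) + ∑ j ∈ L, p j := by
    rw [hTdef, ← Finset.sum_filter_add_sum_filter_not Finset.univ (fun j => t < s j) p]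
  have hLle : ∑ j ∈ L, p j ≤ t * T := by
    rcases L.eq_empty_or_nonempty with h | ⟨j0, hj0⟩
    · simp [h]; positivity
    · obtain ⟨jm, hjmem, hjmax⟩ := L.exists_max_image p ⟨j0, hj0⟩
      have h1 : ∑ j ∈ L, p j ≤ ∑ j' ∈ Finset.univ.filter (fun j' => p j' ≤ p jm), p j' := by
        apply Finset.sum_le_sum_of_subset_of_nonneg
        · intro j hj
          simp only [Finset.mem_filter, Finset.mem_univ, true_and]
          exact hjmax j hj
        · intro j _ _; exact hp j
      have h2 : (∑ j' ∈ Finset.univ.filter (fun j' => p j' ≤ p jm), p j')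
          = ∑ j', if p j' ≤ p jm then p j' else 0 := by
        rw [Finset.sum_filter]
      have hsj : s jm ≤ t := by
        have := (Finset.mem_filter.mp hjmem).2
        linarith [lt_or_ge t (s jm) |>.resolve_left this] 
      have h3 : (∑ j', if p j' ≤ p jm then p j' else 0) = s jm * T := by
        rw [hs]; field_simp
      calc ∑ j ∈ L, p j ≤ s jm * T := by rw [← h3, ← h2]; exact h1
        _ ≤ t * T := by nlinarith
  nlinarith [hLle, hsplit]
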